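/- arXiv:math/0105101 — 4 statements merged into one kernel-verified Lean document; each statement's English description precedes it below -/
import Mathlib

section
/- Let χ be an odd Dirichlet character modulo n and set L^{Im}(e^{2πia/n}, s) = Σ_{k≥1} Im(e^{2πiak/n})/k^s (analytically continued in s). Then for all s ∈ ℂ, (1/(2d)) Σ_{a ∈ (ℤ/n)^×} χ̄(a) L^{Im}(e^{2πia/n}, s) = (1/(2d)) n^{1-s} · (Γ(1 - s/2)/Γ((s+1)/2)) · π^{s - 1/2} · L(χ̄, 1 - s), where d = φ(n)/2 and L(χ̄,·) is the (possibly imprimitive) L-function Σ_{k≥1} χ̄(k) k^{-s}. -/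
open Complex Real DirichletCharacter HurwitzZeta

private lemma aux_tsum (n : ℕ) [NeZero n] (j : ZMod n) {s : ℂ} (hs : 1 < s.re) :
    (∑' k : ℕ+, ((Complex.exp (2 * Real.pi * Complex.I * (j.val : ℂ) / n) ^ (k : ℕ)).im : ℂ)
      / (k : ℂ) ^ s) = sinZeta (ZMod.toAddCircle j) s := by
  rw [ZMod.toAddCircle_apply]
  have h := hasSum_nat_sinZeta ((j.val : ℝ) / n) hs
  have h0 : ∀ (k : ℕ), k ∉ Set.range ((↑) : ℕ+ → ℕ) →
      ((Real.sin (2 * Real.pi * ((j.val : ℝ) / n) * k) : ℂ) / (k : ℂ) ^ s) = 0 := by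
    intro k hk
    have : k = 0 := by
      by_contra h'
      exact hk ⟨⟨k, Nat.pos_of_ne_zero h'⟩, rfl⟩
    simp [this]
  have h2 : HasSum (fun k : ℕ+ ↦
      ((Real.sin (2 * Real.pi * ((j.val : ℝ) / n) * (k : ℕ)) : ℂ) / ((k : ℕ) : ℂ) ^ s))
      (sinZeta (((j.val : ℝ) / n : ℝ) : UnitAddCircle) s) :=
    (Function.Injective.hasSum_iff PNat.coe_injective h0).mpr h
  rw [← h2.tsum_eq]
  refine tsum_congr fun k ↦ ?_
  congr 1
  · congr 1
    rw [← Complex.exp_nat_mul]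
    rw [show ((k : ℕ) : ℂ) * (2 * Real.pi * Complex.I * (j.val : ℂ) / n)
        = ((2 * Real.pi * ((j.val : ℝ) / n) * (k : ℕ) : ℝ) : ℂ) * Complex.I by push_cast; ring]
    rw [Complex.exp_ofReal_mul_I_im]

private lemma aux_fe (A : UnitAddCircle) {s : ℂ} (hs : ∀ k : ℕ, s ≠ 2 + 2 * k) :
    sinZeta A s = (Complex.Gamma (1 - s / 2) / Complex.Gamma ((s + 1) / 2)) *
      (Real.pi : ℂ) ^ (s - 1 / 2) * hurwitzZetaOdd A (1 - s) := by
  have hπ : (Real.pi : ℂ) ≠ 0 := Complex.ofReal_ne_zero.mpr Real.pi_ne_zero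
  have hp : ∀ w : ℂ, (Real.pi : ℂ) ^ w ≠ 0 := fun w ↦ by
    simp [Complex.cpow_eq_zero_iff, hπ]
  have hG2 : Complex.Gamma (1 - s / 2) ≠ 0 := by
    apply Complex.Gamma_ne_zero
    intro m hm
    exact hs m (by field_simp at hm ⊢; linear_combination -hm)
  have h1 : hurwitzZetaOdd A (1 - s) = completedSinZeta A s / Gammaℝ (2 - s) := by
    rw [hurwitzZetaOdd, completedHurwitzZetaOdd_one_sub, show (1 : ℂ) - s + 1 = 2 - s by ring]
  rw [sinZeta, h1, Complex.Gammaℝ_def, Complex.Gammaℝ_def,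
    show (2 - s) / 2 = 1 - s / 2 by ring, show -(2 - s) / 2 = -(1 - s / 2) by ring,
    show -(s + 1) / 2 = -((s + 1) / 2) by ring, Complex.cpow_neg, Complex.cpow_neg]
  rcases eq_or_ne (Complex.Gamma ((s + 1) / 2)) 0 with h | h
  · simp [h]
  · field_simp
    rw [show ((2 : ℂ) - s) / 2 = 1 - s / 2 by ring, eq_div_iff hG2]
    have hpp : (Real.pi : ℂ) ^ ((s * 2 - 1) / 2) * (Real.pi : ℂ) ^ (1 - s / 2)
        = (Real.pi : ℂ) ^ ((s + 1) / 2) := by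
      rw [← Complex.cpow_add _ _ hπ]; ring_nf
    linear_combination (-(Complex.Gamma (1 - s / 2) *
      HurwitzZeta.completedSinZeta A s)) * hpp

private lemma aux_sum (n : ℕ) [NeZero n] (f : ZMod n → ℂ) (hf : ∀ j, ¬IsUnit j → f j = 0) :
    ∑ a : (ZMod n)ˣ, f (a : ZMod n) = ∑ j : ZMod n, f j := by
  classical
  have h1 : ∑ j : ZMod n, f j
      = ∑ j ∈ Finset.univ.image (fun a : (ZMod n)ˣ ↦ (a : ZMod n)), f j := by
    refine (Finset.sum_subset (Finset.subset_univ _) fun j _ hj ↦ hf j fun hu ↦ hj ?_).symm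
    exact Finset.mem_image.mpr ⟨hu.unit, Finset.mem_univ _, hu.unit_spec⟩
  rw [h1, Finset.sum_image (fun a _ b _ h ↦ Units.ext h)]

/-- Functional equation variant: for an odd Dirichlet character `χ` mod `n` and the entire
continuations `F a` of `L^{Im}(e^{2πia/n}, ·)`, one has, away from the poles of `Γ(1-s/2)`,
`(1/(2d)) ∑_a χ̄(a) F_a(s) = (1/(2d)) n^{1-s} (Γ(1-s/2)/Γ((s+1)/2)) π^{s-1/2} L(χ̄, 1-s)`,
where `d = φ(n)/2`. -/
theorem LIm_functional_equation (n : ℕ) (hn : 3 ≤ n) [NeZero n]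
    (χ : DirichletCharacter ℂ n) (hodd : χ (-1) = -1)
    (d : ℕ) (hd : d = Nat.totient n / 2)
    (F : (ZMod n)ˣ → ℂ → ℂ) (hF : ∀ a, Differentiable ℂ (F a))
    (hagree : ∀ a : (ZMod n)ˣ, ∀ s : ℂ, 1 < s.re →
      F a s = ∑' k : ℕ+,
        ((Complex.exp (2 * Real.pi * Complex.I * ((a : ZMod n).val : ℂ) / n) ^ (k : ℕ)).im : ℂ)
          / (k : ℂ) ^ s)
    (s : ℂ) (hs : ∀ k : ℕ, s ≠ 2 + 2 * k) :
    (1 / (2 * d)) * ∑ a : (ZMod n)ˣ, (starRingEnd ℂ) (χ a) * F a s =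
      (1 / (2 * d)) * (n : ℂ) ^ (1 - s) *
        (Complex.Gamma (1 - s / 2) / Complex.Gamma ((s + 1) / 2)) *
        (Real.pi : ℂ) ^ (s - 1 / 2) *
        DirichletCharacter.LFunction (χ.ringHomComp (starRingEnd ℂ)) (1 - s) := by
  set χ' := χ.ringHomComp (starRingEnd ℂ) with hχ'
  have hχodd : (fun j : ZMod n ↦ χ' j).Odd := by
    intro j
    show χ' (-j) = -χ' j
    have : χ' (-j) = χ' (-1) * χ' j := by rw [← map_mul]; ring_nf
    rw [this, hχ', MulChar.ringHomComp_apply, hodd]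
    simp
  -- identify F a with sinZeta
  have hFa : ∀ a : (ZMod n)ˣ, F a s = sinZeta (ZMod.toAddCircle (a : ZMod n)) s := by
    intro a
    have heq : F a = fun z ↦ sinZeta (ZMod.toAddCircle (a : ZMod n)) z := by
      apply AnalyticOnNhd.eq_of_eventuallyEq (z₀ := 2)
        ((hF a).differentiableOn.analyticOnNhd isOpen_univ)
        ((differentiableAt_sinZeta _).differentiableOn.analyticOnNhd isOpen_univ)
      have hopen : {z : ℂ | 1 < z.re} ∈ nhds (2 : ℂ) :=
        (isOpen_lt continuous_const Complex.continuous_re).mem_nhds (by norm_num)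
      filter_upwards [hopen] with z hz
      rw [hagree a z hz, aux_tsum n _ hz]
    rw [heq]
  set A := Complex.Gamma (1 - s / 2) / Complex.Gamma ((s + 1) / 2) with hA
  set B := (Real.pi : ℂ) ^ (s - 1 / 2) with hB
  have key : ∑ a : (ZMod n)ˣ, (starRingEnd ℂ) (χ a) * F a s
      = (n : ℂ) ^ (1 - s) * A * B * DirichletCharacter.LFunction χ' (1 - s) := by
    have hL : DirichletCharacter.LFunction χ' (1 - s) = (n : ℂ) ^ (-(1 - s)) *
        ∑ j : ZMod n, χ' j * hurwitzZetaOdd (ZMod.toAddCircle j) (1 - s) :=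
      ZMod.LFunction_def_odd hχodd (1 - s)
    have hn0 : (n : ℂ) ≠ 0 := Nat.cast_ne_zero.mpr (NeZero.ne n)
    have hsum : ∑ a : (ZMod n)ˣ, (starRingEnd ℂ) (χ a) * F a s
        = A * B * ∑ j : ZMod n, χ' j * hurwitzZetaOdd (ZMod.toAddCircle j) (1 - s) := by
      rw [← aux_sum n (fun j ↦ χ' j * hurwitzZetaOdd (ZMod.toAddCircle j) (1 - s))
        (fun j hj ↦ by
          show χ' j * hurwitzZetaOdd (ZMod.toAddCircle j) (1 - s) = 0
          rw [MulChar.map_nonunit _ hj, zero_mul]), Finset.mul_sum]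
      refine Finset.sum_congr rfl fun a _ ↦ ?_
      rw [hFa a, aux_fe _ hs, hχ', MulChar.ringHomComp_apply, hA, hB]
      ring
    have hnn : (n : ℂ) ^ (1 - s) * (n : ℂ) ^ (-(1 - s)) = 1 := by
      rw [← Complex.cpow_add _ _ hn0]; simp
    rw [hsum, hL, show (n : ℂ) ^ (1 - s) * A * B * ((n : ℂ) ^ (-(1 - s)) *
        ∑ j : ZMod n, χ' j * hurwitzZetaOdd (ZMod.toAddCircle j) (1 - s))
      = ((n : ℂ) ^ (1 - s) * (n : ℂ) ^ (-(1 - s))) *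
        (A * B * ∑ j : ZMod n, χ' j * hurwitzZetaOdd (ZMod.toAddCircle j) (1 - s)) by ring,
      hnn, one_mul]
  rw [mul_assoc, mul_assoc, mul_assoc, key]
  ring
end

section
/- Let G be a finite abelian group of order 2d with an element c of order 2, and let Φ = {Φ_1, …, Φ_d} ⊂ G be a set of coset representatives for {e, c} (a 'CM type': G = Φ ⊔ cΦ). Let f: G → ℂ be an odd function (f(cx) = -f(x)) and M_f the d×d matrix with entries (M_f)_{l,k} = f(Φ_k^{-1}Φ_l). If ⟨f, χ⟩ := (1/|G|) Σ_{g} f(g) χ̄(g) ≠ 0 for every odd character χ of G, then M_f is invertible, and the unique solution of M_f X = Y is given by X_j = Σ_{χ odd} χ(Φ_j) (Σ_l χ̄(Φ_l) Y_l) / (d² ⟨f, χ⟩). -/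
open scoped Classical

noncomputable section

variable {G : Type*} [CommGroup G] [Fintype G]

private def mhToAddChar (χ : G →* ℂˣ) : AddChar (Additive G) ℂ where
  toFun a := χ a.toMul
  map_zero_eq_one' := by simp
  map_add_eq_mul' a b := by
    show ((χ (a.toMul * b.toMul) : ℂˣ) : ℂ) = _
    rw [map_mul, Units.val_mul]

private lemma mhToAddChar_apply (χ : G →* ℂˣ) (g : G) :
    mhToAddChar χ (Additive.ofMul g) = (χ g : ℂ) := rfl

private lemma mhToAddChar_bij :
    Function.Bijective (mhToAddChar (G := G)) := by
  constructor
  · intro χ₁ χ₂ h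
    ext g
    have := DFunLike.congr_fun h (Additive.ofMul g)
    simpa [mhToAddChar_apply] using this
  · intro ψ
    refine ⟨MonoidHom.toHomUnits
      { toFun := fun g => ψ (Additive.ofMul g)
        map_one' := ψ.map_zero_eq_one
        map_mul' := fun a b => ψ.map_add_eq_mul a b }, ?_⟩
    ext a
    rfl

private lemma sum_char_eq [Fintype (G →* ℂˣ)] (g : G) :
    ∑ χ : G →* ℂˣ, (χ g : ℂ) = if g = 1 then (Fintype.card G : ℂ) else 0 := by
  have := Fintype.sum_bijective _ (mhToAddChar_bij (G := G))
    (fun χ : G →* ℂˣ => (χ g : ℂ)) (fun ψ => ψ (Additive.ofMul g)) (fun χ => rfl)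
  rw [this, AddChar.sum_apply_eq_ite]
  rw [Fintype.card_congr (Additive.toMul (α := G))]
  by_cases h : g = 1
  · rw [if_pos h, if_pos (by simp [h])]
  · rw [if_neg h, if_neg (by simpa [ofMul_eq_zero] using h)]

private lemma sum_odd_char [Fintype (G →* ℂˣ)] {c : G} (hc : orderOf c = 2) (g : G) :
    ∑ χ : G →* ℂˣ, (if χ c = -1 then (χ g : ℂ) else 0) =
      (if g = 1 then ((Fintype.card G : ℂ) / 2) else 0) -
        (if g = c then ((Fintype.card G : ℂ) / 2) else 0) := by
  have hc2 : c ^ 2 = 1 := by rw [← hc]; exact pow_orderOf_eq_one c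
  have step : ∀ χ : G →* ℂˣ, (if χ c = -1 then (χ g : ℂ) else 0)
      = ((χ g : ℂ) - (χ (c * g) : ℂ)) / 2 := by
    intro χ
    have hval : ((χ c : ℂ)) = 1 ∨ ((χ c : ℂ)) = -1 := by
      rw [← sq_eq_one_iff]
      have : (χ c) ^ 2 = 1 := by rw [← map_pow, hc2, map_one]
      calc ((χ c : ℂ)) ^ 2 = ((χ c ^ 2 : ℂˣ) : ℂ) := by rw [Units.val_pow_eq_pow_val]
        _ = 1 := by rw [this]; rfl
    have hmul : ((χ (c * g) : ℂ)) = (χ c : ℂ) * (χ g : ℂ) := by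
      rw [map_mul]; rfl
    by_cases h : χ c = -1
    · rw [if_pos h]
      have : ((χ c : ℂ)) = -1 := by rw [h]; rfl
      rw [hmul, this]; ring
    · rw [if_neg h]
      have : ((χ c : ℂ)) = 1 := by
        rcases hval with h1 | h1
        · exact h1
        · exact absurd (Units.ext h1) h
      rw [hmul, this]; ring
  rw [Finset.sum_congr rfl (fun χ _ => step χ)]
  rw [← Finset.sum_div, Finset.sum_sub_distrib, sum_char_eq, sum_char_eq]
  have hcg : (c * g = 1) ↔ (g = c) := by
    constructor
    · intro h; rw [← inv_eq_of_mul_eq_one_right h]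
      rw [inv_eq_iff_mul_eq_one, ← sq]; exact hc2
    · intro h; rw [h, ← sq]; exact hc2
  simp only [hcg]
  have hc1 : g = 1 → g ≠ c := by
    rintro rfl h; rw [← h, orderOf_one] at hc; norm_num at hc
  by_cases h1 : g = 1
  · rw [if_pos h1, if_pos h1, if_neg (hc1 h1), if_neg (hc1 h1), sub_zero, sub_zero]
  · rw [if_neg h1, if_neg h1, zero_sub, zero_sub, neg_div]
    by_cases h2 : g = c
    · rw [if_pos h2, if_pos h2]
    · rw [if_neg h2, if_neg h2]; simp

end

/-- Let `G` be finite abelian of order `2d` with `c` of order 2, `Φ : Fin d → G` a CM type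
(a transversal of `{1, c}`), `f : G → ℂ` odd, and `M` the matrix `(f (Φ k⁻¹ * Φ l))_{l,k}`.
If `⟨f,χ⟩ ≠ 0` for every odd character `χ`, then `M` is invertible and the solution of
`M X = Y` is `X j = ∑_{χ odd} χ(Φ j) (∑_l χ̄(Φ l) Y l) / (d² ⟨f,χ⟩)`. -/
theorem cm_type_matrix_invertible (G : Type*) [CommGroup G] [Fintype G]
    [Fintype (G →* ℂˣ)] (d : ℕ) (hd : Fintype.card G = 2 * d)
    (c : G) (hc : orderOf c = 2)
    (Φ : Fin d → G)
    (hΦ : Function.Bijective (fun p : Fin d × Bool => (if p.2 then c else 1) * Φ p.1))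
    (f : G → ℂ) (hf : ∀ x, f (c * x) = -f x)
    (M : Matrix (Fin d) (Fin d) ℂ) (hM : ∀ l k, M l k = f ((Φ k)⁻¹ * Φ l))
    (hpair : ∀ χ : G →* ℂˣ, χ c = -1 →
      (1 / (2 * d : ℂ)) * ∑ g : G, f g * (starRingEnd ℂ) (χ g : ℂ) ≠ 0) :
    IsUnit M ∧
    ∀ X Y : Fin d → ℂ, M.mulVec X = Y → ∀ j,
      X j = ∑ χ : G →* ℂˣ, if χ c = -1 then
          (χ (Φ j) : ℂ) * (∑ l, (starRingEnd ℂ) ((χ (Φ l) : ℂ)) * Y l) /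
            ((d : ℂ) ^ 2 * ((1 / (2 * d : ℂ)) * ∑ g : G, f g * (starRingEnd ℂ) (χ g : ℂ)))
        else 0 := by
  classical
  have hdnat : d ≠ 0 := by
    have h := Fintype.card_pos (α := G)
    rw [hd] at h; omega
  have hd0 : (d : ℂ) ≠ 0 := Nat.cast_ne_zero.mpr hdnat
  have h2d0 : ((2 * d : ℕ) : ℂ) ≠ 0 := Nat.cast_ne_zero.mpr (by omega)
  -- injectivity facts
  have injΦ : Function.Injective Φ := by
    intro j k h
    have h2 := hΦ.1 (a₁ := (j, false)) (a₂ := (k, false)) (by simpa using h)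
    simpa using congrArg Prod.fst h2
  have hneq : ∀ j k : Fin d, Φ j ≠ c * Φ k := by
    intro j k h
    have h2 := hΦ.1 (a₁ := (j, false)) (a₂ := (k, true)) (by simpa using h)
    simpa using congrArg Prod.snd h2
  -- conjugate of character value
  have hconj : ∀ (χ : G →* ℂˣ) (g : G),
      (starRingEnd ℂ) (χ g : ℂ) = ((χ g⁻¹ : ℂ)) := by
    intro χ g
    have hpow : ((χ g : ℂ)) ^ Fintype.card G = 1 := by
      rw [← Units.val_pow_eq_pow_val, ← map_pow, pow_card_eq_one, map_one, Units.val_one]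
    have hnorm : ‖(χ g : ℂ)‖ = 1 :=
      Complex.norm_eq_one_of_pow_eq_one hpow Fintype.card_ne_zero
    rw [map_inv, ← Complex.inv_eq_conj hnorm, Units.val_inv_eq_inv_val]
  -- doubling
  have L0 : ∀ F : G → ℂ, (∀ x, F (c * x) = F x) →
      ∑ g : G, F g = 2 * ∑ l, F (Φ l) := by
    intro F hF
    rw [← Fintype.sum_bijective _ hΦ _ (fun g => F g) (fun p => rfl)]
    rw [Fintype.sum_prod_type]
    rw [Finset.mul_sum]
    refine Finset.sum_congr rfl fun l _ => ?_
    rw [Fintype.sum_bool]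
    simp [hF, two_mul]
  set S : (G →* ℂˣ) → ℂ := fun χ => ∑ g : G, f g * (starRingEnd ℂ) (χ g : ℂ) with hSdef
  have hS0 : ∀ χ : G →* ℂˣ, χ c = -1 → S χ ≠ 0 := by
    intro χ hχ h0
    exact hpair χ hχ (by show (1 / (2 * (d:ℂ))) * S χ = 0; rw [h0, mul_zero])
  have hcval : ∀ χ : G →* ℂˣ, χ c = -1 → ((χ c : ℂ)) = -1 := by
    intro χ hχ; rw [hχ]; rfl
  -- translation lemma
  have L2 : ∀ χ : G →* ℂˣ, χ c = -1 → ∀ k : Fin d,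
      ∑ l, (starRingEnd ℂ) (χ (Φ l) : ℂ) * f ((Φ k)⁻¹ * Φ l)
        = (starRingEnd ℂ) (χ (Φ k) : ℂ) * S χ / 2 := by
    intro χ hχ k
    have hinv : ∀ x : G, ((starRingEnd ℂ) (χ (c * x) : ℂ)) * f ((Φ k)⁻¹ * (c * x))
        = (starRingEnd ℂ) (χ x : ℂ) * f ((Φ k)⁻¹ * x) := by
      intro x
      have h1 : ((χ (c * x) : ℂ)) = -(χ x : ℂ) := by
        rw [map_mul, Units.val_mul, hcval χ hχ]; ring
      have h2 : (Φ k)⁻¹ * (c * x) = c * ((Φ k)⁻¹ * x) := mul_left_comm _ c x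
      rw [h1, h2, hf, map_neg]
      ring
    have shift : ∑ g : G, (starRingEnd ℂ) (χ g : ℂ) * f ((Φ k)⁻¹ * g)
        = (starRingEnd ℂ) (χ (Φ k) : ℂ) * S χ := by
      rw [← Fintype.sum_equiv (Equiv.mulLeft (Φ k))
        (fun g => (starRingEnd ℂ) (χ (Φ k * g) : ℂ) * f ((Φ k)⁻¹ * (Φ k * g)))
        (fun g => (starRingEnd ℂ) (χ g : ℂ) * f ((Φ k)⁻¹ * g)) (fun g => rfl)]
      rw [hSdef, Finset.mul_sum]
      refine Finset.sum_congr rfl fun g _ => ?_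
      rw [inv_mul_cancel_left, map_mul, Units.val_mul, map_mul]
      ring
    have key : (starRingEnd ℂ) (χ (Φ k) : ℂ) * S χ
        = 2 * ∑ l, (starRingEnd ℂ) (χ (Φ l) : ℂ) * f ((Φ k)⁻¹ * Φ l) := by
      rw [← shift]
      exact L0 (fun g => (starRingEnd ℂ) (χ g : ℂ) * f ((Φ k)⁻¹ * g)) hinv
    linear_combination -key / 2
  -- orthogonality of odd characters along Φ
  have L3 : ∀ j k : Fin d,
      ∑ χ : G →* ℂˣ, (if χ c = -1 then (χ (Φ j) : ℂ) * (starRingEnd ℂ) (χ (Φ k) : ℂ) else 0)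
        = if j = k then (d : ℂ) else 0 := by
    intro j k
    have step : ∀ χ : G →* ℂˣ,
        (if χ c = -1 then (χ (Φ j) : ℂ) * (starRingEnd ℂ) (χ (Φ k) : ℂ) else 0)
          = (if χ c = -1 then ((χ (Φ j * (Φ k)⁻¹) : ℂ)) else 0) := by
      intro χ
      by_cases h : χ c = -1
      · rw [if_pos h, if_pos h, hconj, map_mul, Units.val_mul]
      · rw [if_neg h, if_neg h]
    rw [Finset.sum_congr rfl (fun χ _ => step χ), sum_odd_char hc, hd]
    have h1 : (Φ j * (Φ k)⁻¹ = 1) ↔ j = k := by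
      rw [mul_inv_eq_one]
      exact ⟨fun h => injΦ h, fun h => by rw [h]⟩
    have h2 : Φ j * (Φ k)⁻¹ ≠ c := by
      intro h
      exact hneq j k (by rw [← h]; group)
    rw [if_neg h2, sub_zero]
    by_cases h : j = k
    · rw [if_pos (h1.mpr h), if_pos h]
      push_cast
      field_simp
    · rw [if_neg (fun hh => h (h1.mp hh)), if_neg h]
  -- the inverse matrix
  set N : Matrix (Fin d) (Fin d) ℂ := fun j l =>
    ∑ χ : G →* ℂˣ, if χ c = -1 then
      (χ (Φ j) : ℂ) * (starRingEnd ℂ) (χ (Φ l) : ℂ) / ((d : ℂ) ^ 2 * ((1 / (2 * d : ℂ)) * S χ))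
    else 0 with hNdef
  have hSc : ∀ χ : G →* ℂˣ, (d : ℂ) ^ 2 * ((1 / (2 * d : ℂ)) * S χ) = (d : ℂ) * S χ / 2 := by
    intro χ
    field_simp
  have hNM : N * M = 1 := by
    ext j k
    rw [Matrix.mul_apply]
    have expand1 : ∀ l, N j l * M l k
        = ∑ χ : G →* ℂˣ, ((if χ c = -1 then
            (χ (Φ j) : ℂ) * (starRingEnd ℂ) (χ (Φ l) : ℂ) / ((d : ℂ) * S χ / 2)
          else 0) * f ((Φ k)⁻¹ * Φ l)) := by
      intro l
      simp only [hNdef, hM, Finset.sum_mul]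
      refine Finset.sum_congr rfl fun χ _ => ?_
      rw [hSc]
    rw [Finset.sum_congr rfl (fun l _ => expand1 l), Finset.sum_comm]
    have inner : ∀ χ : G →* ℂˣ,
        ∑ l, ((if χ c = -1 then
            (χ (Φ j) : ℂ) * (starRingEnd ℂ) (χ (Φ l) : ℂ) / ((d : ℂ) * S χ / 2)
          else 0) * f ((Φ k)⁻¹ * Φ l))
        = (if χ c = -1 then (χ (Φ j) : ℂ) * (starRingEnd ℂ) (χ (Φ k) : ℂ) else 0) / d := by
      intro χ
      by_cases h : χ c = -1
      · simp only [if_pos h]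
        have hterm : ∀ l, (χ (Φ j) : ℂ) * (starRingEnd ℂ) (χ (Φ l) : ℂ) / ((d : ℂ) * S χ / 2)
              * f ((Φ k)⁻¹ * Φ l)
            = (χ (Φ j) : ℂ) / ((d : ℂ) * S χ / 2)
              * ((starRingEnd ℂ) (χ (Φ l) : ℂ) * f ((Φ k)⁻¹ * Φ l)) := by
          intro l; ring
        rw [Finset.sum_congr rfl (fun l _ => hterm l), ← Finset.mul_sum, L2 χ h k]
        have hS : S χ ≠ 0 := hS0 χ h
        field_simp
      · simp only [if_neg h, zero_mul, Finset.sum_const_zero, zero_div]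
    rw [Finset.sum_congr rfl (fun χ _ => inner χ), ← Finset.sum_div, L3 j k]
    by_cases h : j = k
    · subst h; rw [if_pos rfl, div_self hd0, Matrix.one_apply_eq]
    · rw [if_neg h, zero_div, Matrix.one_apply_ne h]
  have hMN : M * N = 1 := mul_eq_one_comm.mp hNM
  have hinvM : Invertible M := invertibleOfLeftInverse M N hNM
  refine ⟨isUnit_of_invertible M, ?_⟩
  intro X Y hXY j
  have hX : X = N.mulVec Y := by
    rw [← hXY, Matrix.mulVec_mulVec, hNM, Matrix.one_mulVec]
  rw [hX]
  simp only [Matrix.mulVec, dotProduct]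
  have expand2 : ∀ l, N j l * Y l = ∑ χ : G →* ℂˣ, (if χ c = -1 then
      (χ (Φ j) : ℂ) * ((starRingEnd ℂ) (χ (Φ l) : ℂ) * Y l)
        / ((d : ℂ) ^ 2 * ((1 / (2 * d : ℂ)) * S χ)) else 0) := by
    intro l
    simp only [hNdef, Finset.sum_mul]
    refine Finset.sum_congr rfl fun χ _ => ?_
    by_cases h : χ c = -1
    · rw [if_pos h, if_pos h]; ring
    · rw [if_neg h, if_neg h, zero_mul]
  rw [Finset.sum_congr rfl (fun l _ => expand2 l), Finset.sum_comm]
  refine Finset.sum_congr rfl fun χ _ => ?_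
  by_cases h : χ c = -1
  · simp only [if_pos h]
    rw [← Finset.sum_div, ← Finset.mul_sum]
  · simp only [if_neg h, Finset.sum_const_zero]
end

section
/- Let z ∈ ℂ with |z| = 1, z^n = 1, z ≠ 1, and for u > 0, s ∈ ℂ consider the series F(u) = Σ_{k≥1} k e^{-k²πu/n} Im(z^k). Then for all N ≥ 1 and u > 0, |Σ_{k=1}^{N} k e^{-k²πu/n} Im(z^k)| ≤ 2C √(n/(2πe)) · u^{-1/2}, where C = max_{0≤K} |Σ_{j=0}^{K} Im(z^j)| (which is finite since partial sums of Im(z^j) over full periods vanish). -/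
open Complex Real Finset

private lemma gspe_max_bound {c : ℝ} (hc : 0 < c) {x : ℝ} (hx : 0 ≤ x) :
    x * Real.exp (-(c * x ^ 2)) ≤ Real.sqrt (1 / (2 * c * Real.exp 1)) := by
  have he : (0:ℝ) < Real.exp 1 := Real.exp_pos 1
  apply Real.le_sqrt_of_sq_le
  have hsq : (x * Real.exp (-(c * x ^ 2))) ^ 2 = x ^ 2 * Real.exp (-(2 * c * x ^ 2)) := by
    have h0 : -(c * x ^ 2) + -(c * x ^ 2) = -(2 * c * x ^ 2) := by ring
    rw [mul_pow, pow_two (Real.exp _), ← Real.exp_add, h0]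
  rw [hsq]
  set y : ℝ := 2 * c * x ^ 2 with hy
  have key : y * Real.exp (-y) ≤ Real.exp (-1) := by
    have h1 : y ≤ Real.exp (y - 1) := by
      have := Real.add_one_le_exp (y - 1); linarith
    calc y * Real.exp (-y) ≤ Real.exp (y - 1) * Real.exp (-y) :=
          mul_le_mul_of_nonneg_right h1 (Real.exp_pos _).le
      _ = Real.exp (-1) := by rw [← Real.exp_add]; ring_nf
  have hx2 : x ^ 2 = y / (2 * c) := by rw [hy]; field_simp
  rw [hx2]
  calc y / (2 * c) * Real.exp (-y) = (y * Real.exp (-y)) / (2 * c) := by ring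
    _ ≤ Real.exp (-1) / (2 * c) := by gcongr
    _ = 1 / (2 * c * Real.exp 1) := by rw [Real.exp_neg]; field_simp

private lemma gspe_hasDerivAt (c : ℝ) (x : ℝ) :
    HasDerivAt (fun x : ℝ => x * Real.exp (-(c * x ^ 2)))
      (Real.exp (-(c * x ^ 2)) * (1 - 2 * c * x ^ 2)) x := by
  have h1 : HasDerivAt (fun x : ℝ => -(c * x ^ 2)) (-(c * (2 * x))) x := by
    simpa using ((hasDerivAt_pow 2 x).const_mul c).fun_neg
  have h3 := (hasDerivAt_id x).fun_mul h1.exp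
  refine h3.congr_deriv ?_
  simp [id]; ring

private lemma gspe_mono {c : ℝ} (hc : 0 < c) :
    MonotoneOn (fun x : ℝ => x * Real.exp (-(c * x ^ 2)))
      (Set.Icc 0 (Real.sqrt (1 / (2 * c)))) := by
  apply monotoneOn_of_deriv_nonneg (convex_Icc _ _)
  · fun_prop
  · intro x _
    exact (gspe_hasDerivAt c x).differentiableAt.differentiableWithinAt
  · intro x hx
    rw [interior_Icc] at hx
    rw [(gspe_hasDerivAt c x).deriv]
    have hx2 : x ^ 2 < 1 / (2 * c) := by
      have := (Real.lt_sqrt hx.1.le).mp hx.2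
      linarith
    have h1 : 2 * c * x ^ 2 < 1 := by
      have h2c : (0:ℝ) < 2 * c := by linarith
      calc 2 * c * x ^ 2 < 2 * c * (1 / (2 * c)) := mul_lt_mul_of_pos_left hx2 h2c
        _ = 1 := by field_simp
    have := Real.exp_pos (-(c * x ^ 2))
    nlinarith

private lemma gspe_anti {c : ℝ} (hc : 0 < c) :
    AntitoneOn (fun x : ℝ => x * Real.exp (-(c * x ^ 2)))
      (Set.Ici (Real.sqrt (1 / (2 * c)))) := by
  apply antitoneOn_of_deriv_nonpos (convex_Ici _)
  · fun_prop
  · intro x _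
    exact (gspe_hasDerivAt c x).differentiableAt.differentiableWithinAt
  · intro x hx
    rw [interior_Ici] at hx
    rw [(gspe_hasDerivAt c x).deriv]
    have ht0 : (0:ℝ) ≤ Real.sqrt (1 / (2 * c)) := Real.sqrt_nonneg _
    have hx2 : 1 / (2 * c) < x ^ 2 := (Real.sqrt_lt' (lt_of_le_of_lt ht0 hx)).mp hx
    have h1 : 1 < 2 * c * x ^ 2 := by
      have h2c : (0:ℝ) < 2 * c := by linarith
      calc (1:ℝ) = 2 * c * (1 / (2 * c)) := by field_simp
        _ < 2 * c * x ^ 2 := mul_lt_mul_of_pos_left hx2 h2c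
    have := Real.exp_pos (-(c * x ^ 2))
    nlinarith

private lemma gspe_tv (a : ℕ → ℝ) (M : ℝ) (ha0 : ∀ k, 0 ≤ a k) (haM : ∀ k, a k ≤ M)
    (K0 : ℕ) (hinc : ∀ k, k + 1 ≤ K0 → a k ≤ a (k + 1))
    (hdec : ∀ k, K0 + 1 ≤ k → a (k + 1) ≤ a k) :
    ∀ N, 1 ≤ N → (∑ k ∈ Finset.Icc 1 (N - 1), |a (k + 1) - a k|) + a N ≤ 2 * M := by
  intro N
  induction N with
  | zero => omega
  | succ m ih =>
    intro _
    rcases Nat.eq_zero_or_pos m with rfl | hm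
    · have h1 : a 1 ≤ M := haM 1
      have h2 : 0 ≤ M := le_trans (ha0 0) (haM 0)
      rw [show 0 + 1 - 1 = 0 by omega, Finset.Icc_eq_empty (by omega), Finset.sum_empty]
      norm_num; linarith
    · by_cases hcase : a (m + 1) ≤ a m
      · have hsplit : ∑ k ∈ Finset.Icc 1 (m + 1 - 1), |a (k + 1) - a k|
            = (∑ k ∈ Finset.Icc 1 (m - 1), |a (k + 1) - a k|) + |a (m + 1) - a m| := by
          have hm1 : m - 1 + 1 = m := by omega
          rw [show m + 1 - 1 = (m - 1) + 1 by omega,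
            Finset.sum_Icc_succ_top (by omega), hm1]
        have ihm := ih hm
        rw [hsplit, abs_of_nonpos (by linarith)]
        linarith
      · push_neg at hcase
        have hmK : m ≤ K0 := by
          by_contra h
          exact absurd (hdec m (by omega)) (not_le.mpr hcase)
        have hall : ∀ k, 1 ≤ k → k ≤ m → a k ≤ a (k + 1) := by
          intro k _ hk
          rcases Nat.lt_or_ge k m with h | h
          · exact hinc k (by omega)
          · have : k = m := by omega
            rw [this]; exact hcase.le
        have htel : ∑ k ∈ Finset.Icc 1 (m + 1 - 1), |a (k + 1) - a k| = a (m + 1) - a 1 := by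
          rw [show m + 1 - 1 = m from rfl]
          have h1 : ∀ k ∈ Finset.Icc 1 m, |a (k + 1) - a k| = a (k + 1) - a k := by
            intro k hk
            rw [Finset.mem_Icc] at hk
            exact abs_of_nonneg (by linarith [hall k hk.1 hk.2])
          rw [Finset.sum_congr rfl h1, ← Finset.Ico_add_one_right_eq_Icc,
            Finset.sum_Ico_eq_sum_range]
          have h3 : ∀ m' : ℕ, ∑ i ∈ Finset.range m', (a (1 + i + 1) - a (1 + i))
              = a (1 + m') - a 1 := by
            intro m'
            induction m' with
            | zero => simp
            | succ p ihp =>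
              rw [Finset.sum_range_succ, ihp, show 1 + (p + 1) = 1 + p + 1 by omega]
              ring
          rw [h3, show 1 + (m + 1 - 1) = m + 1 by omega]
        rw [htel]
        have := haM (m + 1)
        have := ha0 1
        linarith

/-- Abel-summation estimate: for a nontrivial `n`-th root of unity `z` and `C` a bound for
the partial sums of `Im(z^j)`, the partial sums of `∑ k e^{-k²πu/n} Im(z^k)` are bounded by
`2C √(n/(2πe)) u^{-1/2}` for all `u > 0`. -/
theorem gauss_sum_partial_estimate (n : ℕ) (hn : 1 ≤ n) (z : ℂ)
    (hz : ‖z‖ = 1) (hzn : z ^ n = 1) (hz1 : z ≠ 1)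
    (C : ℝ) (hC : ∀ K : ℕ, |∑ j ∈ Finset.range (K + 1), (z ^ j).im| ≤ C)
    (N : ℕ) (hN : 1 ≤ N) (u : ℝ) (hu : 0 < u) :
    |∑ k ∈ Finset.Icc 1 N, (k : ℝ) * Real.exp (-(k : ℝ) ^ 2 * Real.pi * u / n) * (z ^ k).im|
      ≤ 2 * C * Real.sqrt (n / (2 * Real.pi * Real.exp 1)) * u ^ (-(1 / 2 : ℝ)) := by
  have hn0 : (0:ℝ) < (n:ℝ) := by exact_mod_cast hn
  have hpi := Real.pi_pos
  have he : (0:ℝ) < Real.exp 1 := Real.exp_pos 1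
  set c : ℝ := Real.pi * u / n with hc_def
  have hc : 0 < c := by positivity
  set a : ℕ → ℝ := fun k => (k:ℝ) * Real.exp (-(c * (k:ℝ) ^ 2)) with ha_def
  set b : ℕ → ℝ := fun k => (z ^ k).im with hb_def
  have hsummand : ∀ k : ℕ,
      (k : ℝ) * Real.exp (-(k : ℝ) ^ 2 * Real.pi * u / n) * (z ^ k).im = a k * b k := by
    intro k
    have : -(k : ℝ) ^ 2 * Real.pi * u / n = -(c * (k:ℝ) ^ 2) := by
      rw [hc_def]; ring
    rw [this]
  set M : ℝ := Real.sqrt (1 / (2 * c * Real.exp 1)) with hM_def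
  have ha0 : ∀ k, 0 ≤ a k := by
    intro k; exact mul_nonneg (Nat.cast_nonneg k) (Real.exp_pos _).le
  have haM : ∀ k, a k ≤ M := fun k => gspe_max_bound hc (Nat.cast_nonneg k)
  -- unimodality
  set t : ℝ := Real.sqrt (1 / (2 * c)) with ht_def
  set K0 : ℕ := ⌊t⌋₊ with hK0_def
  have hinc : ∀ k, k + 1 ≤ K0 → a k ≤ a (k + 1) := by
    intro k hk
    have hk1 : ((k:ℝ) + 1) ≤ t := by
      have h1 : ((k + 1 : ℕ) : ℝ) ≤ (K0 : ℝ) := by exact_mod_cast hk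
      have h2 : (K0 : ℝ) ≤ t := Nat.floor_le (Real.sqrt_nonneg _)
      push_cast at h1
      linarith
    have := gspe_mono hc (a := (k:ℝ)) (b := ((k:ℝ) + 1))
      ⟨Nat.cast_nonneg k, by linarith⟩ ⟨by positivity, hk1⟩ (by linarith)
    simpa [ha_def, Nat.cast_succ] using this
  have hdec : ∀ k, K0 + 1 ≤ k → a (k + 1) ≤ a k := by
    intro k hk
    have hk1 : t ≤ (k:ℝ) := by
      have h1 : t < (K0 : ℝ) + 1 := Nat.lt_floor_add_one t
      have h2 : ((K0 + 1 : ℕ) : ℝ) ≤ (k : ℝ) := by exact_mod_cast hk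
      push_cast at h2
      linarith
    have := gspe_anti hc (a := (k:ℝ)) (b := ((k:ℝ) + 1))
      hk1 (by simp only [Set.mem_Ici]; linarith) (by linarith)
    simpa [ha_def, Nat.cast_succ] using this
  have htv := gspe_tv a M ha0 haM K0 hinc hdec N hN
  -- partial sums of b
  have hB : ∀ K : ℕ, |∑ j ∈ Finset.range (K + 1), b j| ≤ C := hC
  have hC0 : 0 ≤ C := le_trans (abs_nonneg _) (hC 0)
  -- Abel summation
  have habel := Finset.sum_Ioc_by_parts a b (show 0 < N from hN)
  simp only [smul_eq_mul] at habel
  have hG1 : ∑ i ∈ Finset.range (0 + 1 + 1 - 1), b i = 0 := by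
    simp [hb_def]
  have hIcc : Finset.Icc 1 N = Finset.Ioc 0 N := by
    exact Finset.Icc_add_one_left_eq_Ioc 0 N
  calc |∑ k ∈ Finset.Icc 1 N, (k : ℝ) * Real.exp (-(k : ℝ) ^ 2 * Real.pi * u / n) * (z ^ k).im|
      = |∑ k ∈ Finset.Ioc 0 N, a k * b k| := by
        rw [hIcc]; congr 1; exact Finset.sum_congr rfl fun k _ => hsummand k
    _ = |a N * (∑ i ∈ Finset.range (N + 1), b i)
          - ∑ k ∈ Finset.Ioc 0 (N - 1), (a (k + 1) - a k) * (∑ i ∈ Finset.range (k + 1), b i)| := by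
        rw [habel]
        simp [hb_def]
    _ ≤ |a N * (∑ i ∈ Finset.range (N + 1), b i)|
          + |∑ k ∈ Finset.Ioc 0 (N - 1), (a (k + 1) - a k) * (∑ i ∈ Finset.range (k + 1), b i)| :=
        abs_sub _ _
    _ ≤ a N * C + ∑ k ∈ Finset.Ioc 0 (N - 1), |a (k + 1) - a k| * C := by
        gcongr ?_ + ?_
        · rw [abs_mul, _root_.abs_of_nonneg (ha0 N)]
          exact mul_le_mul_of_nonneg_left (hB N) (ha0 N)
        · refine le_trans (Finset.abs_sum_le_sum_abs _ _) (Finset.sum_le_sum fun k _ => ?_)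
          rw [abs_mul]
          rcases Nat.eq_zero_or_pos k with rfl | hk
          · exact mul_le_mul_of_nonneg_left (by simpa using hB 0) (abs_nonneg _)
          · obtain ⟨j, rfl⟩ := Nat.exists_eq_add_of_le hk
            exact mul_le_mul_of_nonneg_left (by simpa using hB (1 + j)) (abs_nonneg _)
    _ = ((∑ k ∈ Finset.Icc 1 (N - 1), |a (k + 1) - a k|) + a N) * C := by
        rw [show Finset.Icc 1 (N - 1) = Finset.Ioc 0 (N - 1) from Finset.Icc_add_one_left_eq_Ioc 0 (N - 1),
          add_mul, Finset.sum_mul]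
        ring
    _ ≤ (2 * M) * C := mul_le_mul_of_nonneg_right htv hC0
    _ = 2 * C * M := by ring
    _ = 2 * C * Real.sqrt (n / (2 * Real.pi * Real.exp 1)) * u ^ (-(1 / 2 : ℝ)) := by
        have h1 : u ^ (-(1 / 2 : ℝ)) = Real.sqrt u⁻¹ := by
          rw [Real.rpow_neg hu.le, ← Real.sqrt_eq_rpow, Real.sqrt_inv]
        have h2 : Real.sqrt ((n : ℝ) / (2 * Real.pi * Real.exp 1)) * Real.sqrt u⁻¹
            = Real.sqrt (1 / (2 * c * Real.exp 1)) := by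
          rw [← Real.sqrt_mul (by positivity)]
          congr 1
          rw [hc_def]
          field_simp
        rw [hM_def, h1, ← h2]
        ring
  done
end

section
/- Let d ≥ 1, and for 1 ≤ j ≤ d let φ_j ∈ ℝ \ 2πℤ and ν_j > 0. Suppose the spectrum of an operator on a ℤ-graded space is such that, for q = 0,…,d and tuples (n_1,…,n_d) ∈ ℕ^d, the eigenvalue 2π Σ_j n_j ν_j occurs in degree q with g-trace T·binom(#{j : n_j ≠ 0}, q)·Π_j e^{i n_j φ_j} (T a fixed constant). Then the associated zeta function Z(s) = Σ_q (−1)^{q+1} q Σ_{(n_j)≠0} (trace)/(eigenvalue)^s equals T · Σ_{j=1}^d (2π ν_j)^{-s} L(e^{iφ_j}, s), where L(z,s) = Σ_{k≥1} z^k/k^s. -/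
open Complex Finset
open scoped Classical

lemma comb_sum (d c : ℕ) (hc : c ≤ d) :
    ∑ q ∈ Finset.range (d+1), ((-1:ℂ)^(q+1) * q * (c.choose q)) = if c = 1 then 1 else 0 := by
  have h1 : ∑ q ∈ Finset.range (c+1), ((-1:ℂ)^(q+1) * q * (c.choose q))
      = ∑ q ∈ Finset.range (d+1), ((-1:ℂ)^(q+1) * q * (c.choose q)) := by
    apply Finset.sum_subset (Finset.range_subset_range.mpr (by omega))
    intro x _ hx
    have : c < x := by simpa using hx
    simp [Nat.choose_eq_zero_of_lt this]
  rw [← h1]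
  cases c with
  | zero => simp
  | succ m =>
    rw [Finset.sum_range_succ']
    have key : ∀ q : ℕ, ((-1:ℂ))^(q+1+1) * (q+1 : ℕ) * ((m+1).choose (q+1) : ℂ)
        = (m+1 : ℂ) * ((-1:ℂ)^q * (m.choose q : ℂ)) := by
      intro q
      have h2 : ((q+1 : ℕ) : ℂ) * ((m+1).choose (q+1) : ℂ) = ((m+1 : ℕ) : ℂ) * (m.choose q : ℂ) := by
        rw [← Nat.cast_mul, ← Nat.cast_mul, Nat.add_one_mul_choose_eq, mul_comm]
      calc ((-1:ℂ))^(q+1+1) * (q+1 : ℕ) * ((m+1).choose (q+1) : ℂ)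
          = (-1:ℂ)^q * (((q+1 : ℕ):ℂ) * ((m+1).choose (q+1) : ℂ)) := by rw [pow_succ, pow_succ]; ring
        _ = (m+1 : ℂ) * ((-1:ℂ)^q * (m.choose q : ℂ)) := by rw [h2]; push_cast; ring
    have halt : ∑ q ∈ Finset.range (m+1), ((-1:ℂ)^q * (m.choose q : ℂ)) = if m = 0 then 1 else 0 := by
      have := Int.alternating_sum_range_choose (n := m)
      have h3 := congrArg (Int.cast : ℤ → ℂ) this
      push_cast at h3
      simpa using h3
    simp only [key]
    rw [← Finset.mul_sum, halt]
    cases m <;> simp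


/-- The zeta function of the torsion computation: summing the graded traces
`(−1)^{q+1} q · T · binom(#{j : n_j ≠ 0}, q) · Π_j e^{i n_j φ_j}` over eigenvalues
`2π Σ_j n_j ν_j` collapses, via the combinatorial identity, to
`T · Σ_j (2πν_j)^{-s} L(e^{iφ_j}, s)`. -/
theorem torsion_zeta_function_eq (d : ℕ) (hd : 1 ≤ d)
    (φ : Fin d → ℝ) (hφ : ∀ j, ∀ m : ℤ, φ j ≠ 2 * Real.pi * m)
    (ν : Fin d → ℝ) (hν : ∀ j, 0 < ν j) (T : ℂ) (s : ℂ) (hs : 1 < s.re) :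
    (∑' n : Fin d → ℕ, if n ≠ 0 then
        (∑ q ∈ Finset.range (d + 1),
          ((-1 : ℂ) ^ (q + 1) * q * (Nat.choose (Finset.univ.filter
            (fun j => n j ≠ 0)).card q))) *
          T * (∏ j, Complex.exp (Complex.I * (n j * φ j))) /
          (((2 * Real.pi * ∑ j, (n j : ℝ) * ν j : ℝ) : ℂ) ^ s)
      else 0) =
      T * ∑ j, (((2 * Real.pi * ν j : ℝ) : ℂ) ^ (-s)) *
        ∑' k : ℕ+, Complex.exp (Complex.I * φ j) ^ (k : ℕ) / (k : ℂ) ^ s := by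
  -- abbreviations
  set F : (Fin d → ℕ) → ℂ := fun n => if n ≠ 0 then
        (∑ q ∈ Finset.range (d + 1),
          ((-1 : ℂ) ^ (q + 1) * q * (Nat.choose (Finset.univ.filter
            (fun j => n j ≠ 0)).card q))) *
          T * (∏ j, Complex.exp (Complex.I * (n j * φ j))) /
          (((2 * Real.pi * ∑ j, (n j : ℝ) * ν j : ℝ) : ℂ) ^ s)
      else 0 with hF
  set G : Fin d × ℕ+ → ℂ := fun p =>
      T * ((((2 * Real.pi * ν p.1 : ℝ) : ℂ) ^ (-s)) *
        (Complex.exp (Complex.I * φ p.1) ^ ((p.2 : ℕ)) / ((p.2 : ℕ) : ℂ) ^ s)) with hG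
  have pi_pos := Real.pi_pos
  -- summability of the inner series
  have hH : ∀ j : Fin d, Summable (fun k : ℕ+ =>
      Complex.exp (Complex.I * φ j) ^ (k : ℕ) / ((k : ℕ) : ℂ) ^ s) := by
    intro j
    apply Summable.of_norm
    have hnorm : ∀ k : ℕ+, ‖Complex.exp (Complex.I * φ j) ^ (k : ℕ) / ((k : ℕ) : ℂ) ^ s‖
        = ((((k:ℕ) : ℝ)) ^ s.re)⁻¹ := by
      intro k
      rw [norm_div, norm_pow]
      have h1 : ‖Complex.exp (Complex.I * φ j)‖ = 1 := by
        rw [Complex.norm_exp]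
        simp [Complex.mul_re]
      rw [h1, one_pow, Complex.norm_natCast_cpow_of_pos k.pos, one_div]
    rw [summable_congr (fun k => hnorm k)]
    have base : Summable (fun n : ℕ => (((n : ℝ)) ^ s.re)⁻¹) :=
      Real.summable_nat_rpow_inv.mpr hs
    exact base.comp_injective PNat.coe_injective
  have hGsumm : Summable G := by
    have hfib : ∀ j : Fin d, Summable (fun p : Fin d × ℕ+ => if p.1 = j then G p else 0) := by
      intro j
      have hinj : Function.Injective (fun k : ℕ+ => ((j, k) : Fin d × ℕ+)) := by
        intro a b h; simpa using congrArg Prod.snd h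
      refine (Function.Injective.summable_iff hinj ?_).mp ?_
      · intro p hp
        have : p.1 ≠ j := by
          intro h
          exact hp ⟨p.2, by simp [Prod.ext_iff, h]⟩
        simp only [if_neg this]
      · have hcomp : ((fun p : Fin d × ℕ+ => if p.1 = j then G p else 0) ∘ (fun k : ℕ+ => (j,k)))
            = fun k : ℕ+ => G (j,k) := by funext k; simp
        rw [hcomp]
        exact ((hH j).mul_left (T * (((2 * Real.pi * ν j : ℝ) : ℂ) ^ (-s)))).congr (fun k => by rw [hG]; ring)
    have : G = fun p => ∑ j : Fin d, (if p.1 = j then G p else 0) := by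
      funext p; simp
    rw [this]
    exact summable_sum (fun j _ => hfib j)
  -- the value of F at a single-index point
  have hFG : ∀ (j : Fin d) (k : ℕ+), F (Pi.single j (k : ℕ) : Fin d → ℕ) = G (j, k) := by
    intro j k
    set n₀ : Fin d → ℕ := Pi.single j (k : ℕ) with hn₀
    have hne : n₀ ≠ 0 := by
      intro h
      have := congrFun h j
      simp [hn₀] at this
    have hfilter : (Finset.univ.filter (fun j' => n₀ j' ≠ 0)) = {j} := by
      ext j'
      simp only [Finset.mem_filter, Finset.mem_univ, true_and, Finset.mem_singleton,
        hn₀, Pi.single_apply]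
      constructor
      · intro h; by_contra hne'; simp [hne'] at h
      · intro h; simp [h, k.ne_zero]
    have hsum : (∑ j', ((n₀ j' : ℕ) : ℝ) * ν j') = (k : ℕ) * ν j := by
      rw [Finset.sum_eq_single j]
      · simp [hn₀]
      · intro b _ hb; simp [hn₀, Pi.single_apply, hb]
      · simp
    have hprod : (∏ j', Complex.exp (Complex.I * (n₀ j' * φ j')))
        = Complex.exp (Complex.I * ((k : ℕ) * φ j)) := by
      rw [Finset.prod_eq_single j]
      · simp [hn₀]
      · intro b _ hb; simp [hn₀, Pi.single_apply, hb]
      · simp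
    have hcomb : (∑ q ∈ Finset.range (d + 1),
        ((-1 : ℂ) ^ (q + 1) * q * (Nat.choose (Finset.univ.filter
          (fun j' => n₀ j' ≠ 0)).card q))) = 1 := by
      rw [hfilter]
      simpa using comb_sum d 1 hd
    rw [hF]
    simp only [hne, if_true, ne_eq, not_false_iff]
    rw [hcomb, hsum, hprod, hG]
    -- now pure algebra
    have hνj := hν j
    have hA : (0:ℝ) ≤ 2 * Real.pi * ν j := by positivity
    have hk : (0:ℝ) ≤ ((k:ℕ) : ℝ) := Nat.cast_nonneg _
    have hsplit : (((2 * Real.pi * ((k:ℕ) * ν j) : ℝ)) : ℂ) ^ s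
        = (((2 * Real.pi * ν j : ℝ)) : ℂ) ^ s * ((((k:ℕ):ℝ)) : ℂ) ^ s := by
      rw [show ((2 * Real.pi * ((k:ℕ) * ν j) : ℝ) : ℂ) = ((2 * Real.pi * ν j : ℝ) : ℂ) * ((((k:ℕ):ℝ)) : ℂ) by push_cast; ring]
      exact mul_cpow_ofReal_nonneg hA hk s
    have hexp : Complex.exp (Complex.I * ((k : ℕ) * φ j))
        = Complex.exp (Complex.I * φ j) ^ (k : ℕ) := by
      rw [← Complex.exp_nat_mul]
      ring_nf
    rw [hsplit, hexp]
    have hAne : ((((2 * Real.pi * ν j : ℝ)) : ℂ) ^ s) ≠ 0 := by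
      intro h0
      rw [Complex.cpow_eq_zero_iff] at h0
      have hpos : (0:ℝ) < 2 * Real.pi * ν j := by positivity
      exact (Complex.ofReal_ne_zero.mpr hpos.ne') h0.1
    have hkne : ((((k:ℕ):ℝ):ℂ)) ^ s ≠ 0 := by
      intro h0
      rw [Complex.cpow_eq_zero_iff] at h0
      have : ((k:ℕ):ℝ) ≠ 0 := Nat.cast_ne_zero.mpr k.ne_zero
      exact (Complex.ofReal_ne_zero.mpr this) h0.1
    show _ = T * ((((2 * Real.pi * ν j : ℝ)) : ℂ) ^ (-s) *
        (Complex.exp (Complex.I * φ j) ^ ((k : ℕ)) / (((k:ℕ)) : ℂ) ^ s))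
    rw [Complex.cpow_neg]
    rw [show (((k:ℕ)) : ℂ) = ((((k:ℕ):ℝ)) : ℂ) by push_cast; ring]
    field_simp
  -- injectivity of the single-index map
  have hinj2 : ∀ p q : Fin d × ℕ+,
      (Pi.single p.1 ((p.2 : ℕ)) : Fin d → ℕ) = Pi.single q.1 ((q.2 : ℕ)) → p = q := by
    rintro ⟨j, k⟩ ⟨j', k'⟩ h
    rcases eq_or_ne j j' with rfl | hne
    · have := congrFun h j
      simp [Pi.single_apply] at this
      exact Prod.ext rfl (by exact_mod_cast PNat.coe_injective (by exact_mod_cast this))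
    · have := congrFun h j
      simp [Pi.single_apply, hne] at this
  have hfib : ∀ j : Fin d, Summable (fun c : ℕ+ => G (j, c)) := fun j =>
    ((hH j).mul_left (T * (((2 * Real.pi * ν j : ℝ) : ℂ) ^ (-s)))).congr
      (fun k => by rw [hG]; ring)
  have hFsum : HasSum F (∑' p, G p) := by
    refine (hasSum_iff_hasSum_of_ne_zero_bij
      (fun x => (Pi.single x.1.1 ((x.1.2 : ℕ)) : Fin d → ℕ)) ?_ ?_ ?_).mpr hGsumm.hasSum
    · intro x y hxy
      exact Subtype.ext (hinj2 _ _ hxy)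
    · intro n hn
      have hn' : F n ≠ 0 := hn
      have hn0 : n ≠ 0 := by
        intro h; rw [hF] at hn'; simp [h] at hn'
      have hnval := hn'
      rw [hF] at hnval
      simp only [hn0, ne_eq, not_false_iff, if_true] at hnval
      have hq : (∑ q ∈ Finset.range (d + 1),
          ((-1 : ℂ) ^ (q + 1) * q * (Nat.choose (Finset.univ.filter
            (fun j => n j ≠ 0)).card q))) ≠ 0 := by
        intro h0; rw [h0] at hnval; simp at hnval
      have hcard : (Finset.univ.filter (fun j => n j ≠ 0)).card = 1 := by
        by_contra hc
        rw [comb_sum d _ ((Finset.card_filter_le _ _).trans (by simp))] at hq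
        simp [hc] at hq
      obtain ⟨a, ha⟩ := Finset.card_eq_one.mp hcard
      have hna : n a ≠ 0 := by
        have : a ∈ Finset.univ.filter (fun j => n j ≠ 0) := by
          rw [ha]; exact Finset.mem_singleton_self a
        simpa using this
      set kk : ℕ+ := ⟨n a, Nat.pos_of_ne_zero hna⟩ with hkk
      have heq : (Pi.single a ((kk : ℕ)) : Fin d → ℕ) = n := by
        funext j'
        rcases eq_or_ne j' a with rfl | hj'
        · simp [hkk]
        · have hmem : j' ∉ Finset.univ.filter (fun j => n j ≠ 0) := by
            rw [ha]; simpa using hj'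
          simp only [Finset.mem_filter, Finset.mem_univ, true_and, not_not] at hmem
          simp [Pi.single_apply, hj', hmem]
      have hGne : G (a, kk) ≠ 0 := by
        rw [← hFG a kk, heq]; exact hn'
      exact ⟨⟨(a, kk), Function.mem_support.mpr hGne⟩, heq⟩
    · exact fun x => hFG x.1.1 x.1.2
  rw [hFsum.tsum_eq, hGsumm.tsum_prod' hfib, tsum_fintype, Finset.mul_sum]
  refine Finset.sum_congr rfl (fun j _ => ?_)
  have hGval : ∀ k : ℕ+, G (j, k) = (T * (((2 * Real.pi * ν j : ℝ) : ℂ) ^ (-s))) *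
      (Complex.exp (Complex.I * φ j) ^ (k : ℕ) / ((k : ℕ) : ℂ) ^ s) :=
    fun k => by rw [hG]; ring
  rw [tsum_congr hGval, tsum_mul_left]
  ring
end
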